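/- Let p and Q be nonzero complex numbers. Then the quantum R matrix Ř⁴ satisfies the braid-form quantum Yang–Baxter equation: (Ř⁴ ⊗ I₄)(I₄ ⊗ Ř⁴)(Ř⁴ ⊗ I₄) = (I₄ ⊗ Ř⁴)(Ř⁴ ⊗ I₄)(I₄ ⊗ Ř⁴), an identity of 64×64 complex matrices. -/

import Mathlib

open Matrix

noncomputable section

/-- The elementary matrix `E(a,b;c,d)` on `ℂ⁴ ⊗ ℂ⁴`. -/
def E (a b c d : Fin 4) : Matrix (Fin 4 × Fin 4) (Fin 4 × Fin 4) ℂ :=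
  Matrix.single (a, b) (c, d) 1

/-- `M ⊗ I₄`, acting on the first two factors of `ℂ⁴ ⊗ ℂ⁴ ⊗ ℂ⁴`. -/
def op12 (M : Matrix (Fin 4 × Fin 4) (Fin 4 × Fin 4) ℂ) :
    Matrix (Fin 4 × Fin 4 × Fin 4) (Fin 4 × Fin 4 × Fin 4) ℂ :=
  Matrix.of fun x y => M (x.1, x.2.1) (y.1, y.2.1) * (if x.2.2 = y.2.2 then 1 else 0)

/-- `I₄ ⊗ M`, acting on the last two factors of `ℂ⁴ ⊗ ℂ⁴ ⊗ ℂ⁴`. -/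
def op23 (M : Matrix (Fin 4 × Fin 4) (Fin 4 × Fin 4) ℂ) :
    Matrix (Fin 4 × Fin 4 × Fin 4) (Fin 4 × Fin 4 × Fin 4) ℂ :=
  Matrix.of fun x y => (if x.1 = y.1 then 1 else 0) * M (x.2.1, x.2.2) (y.2.1, y.2.2)

/-- The left quantum partial trace `T(C, M)_{a,b} = Σ_{c,d} C_{d,c} M_{(c,a),(d,b)}`. -/
def ptrace (C : Matrix (Fin 4) (Fin 4) ℂ) (M : Matrix (Fin 4 × Fin 4) (Fin 4 × Fin 4) ℂ) :
    Matrix (Fin 4) (Fin 4) ℂ :=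
  Matrix.of fun a b => ∑ c : Fin 4, ∑ d : Fin 4, C d c * M (c, a) (d, b)

/-- The quantum R matrix `Ř⁴` (Case 4), with complex parameters `p, Q`
(indices shifted from 1–4 to 0–3). -/
def R4 (p Q : ℂ) : Matrix (Fin 4 × Fin 4) (Fin 4 × Fin 4) ℂ :=
  E 0 0 0 0
  - (p ^ 2 * Q⁻¹ ^ 2) • (E 1 1 1 1 + E 2 2 2 2)
  + (p ^ 4) • E 3 3 3 3
  + (p * Q⁻¹) • (E 0 1 1 0 + E 0 2 2 0 + E 1 0 0 1 + E 2 0 0 2)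
  + (p ^ 3 * Q⁻¹) • (E 1 3 3 1 + E 2 3 3 2 + E 3 1 1 3 + E 3 2 2 3)
  + (p ^ 2 * Q⁻¹ ^ 2) • (E 0 3 3 0 + E 3 0 0 3)
  - (p ^ 2) • (E 1 2 2 1 + E 2 1 1 2)

/-- Weighted flip matrix: nonzero entries only at `((x1,x2),(x2,x1))`. -/
def Rr (r : Fin 4 → Fin 4 → ℂ) : Matrix (Fin 4 × Fin 4) (Fin 4 × Fin 4) ℂ :=
  Matrix.of fun x y => if y = (x.2, x.1) then r x.1 x.2 else 0

lemma ybe (r : Fin 4 → Fin 4 → ℂ) :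
    op12 (Rr r) * op23 (Rr r) * op12 (Rr r) = op23 (Rr r) * op12 (Rr r) * op23 (Rr r) := by
  ext ⟨a, b, c⟩ ⟨d, e, f⟩
  simp [Matrix.mul_apply, op12, op23, Rr, Fintype.sum_prod_type, Prod.ext_iff,
    ite_and, mul_ite, ite_mul, mul_zero, zero_mul, Finset.sum_ite_eq, Finset.sum_ite_eq']
  split_ifs <;> simp_all <;> ring

def rfun (p Q : ℂ) : Fin 4 → Fin 4 → ℂ := fun a b =>
  if a = 0 ∧ b = 0 then 1
  else if (a = 1 ∧ b = 1) ∨ (a = 2 ∧ b = 2) then -(p ^ 2 * Q⁻¹ ^ 2)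
  else if a = 3 ∧ b = 3 then p ^ 4
  else if (a = 0 ∧ (b = 1 ∨ b = 2)) ∨ ((a = 1 ∨ a = 2) ∧ b = 0) then p * Q⁻¹
  else if ((a = 1 ∨ a = 2) ∧ b = 3) ∨ (a = 3 ∧ (b = 1 ∨ b = 2)) then p ^ 3 * Q⁻¹
  else if (a = 0 ∧ b = 3) ∨ (a = 3 ∧ b = 0) then p ^ 2 * Q⁻¹ ^ 2
  else -(p ^ 2)

set_option maxHeartbeats 2000000 in
lemma R4_eq (p Q : ℂ) : R4 p Q = Rr (rfun p Q) := by
  ext ⟨a, b⟩ ⟨c, d⟩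
  simp only [R4, Rr, E, rfun, Matrix.sub_apply, Matrix.add_apply, Matrix.smul_apply,
    Matrix.of_apply, Matrix.single, smul_eq_mul, Prod.mk.injEq]
  fin_cases a <;> fin_cases b <;> fin_cases c <;> fin_cases d <;>
    norm_num [Fin.ext_iff] <;> simp_all (config := { decide := true })

/-- The quantum R matrix `Ř⁴` satisfies the braid-form quantum Yang–Baxter equation. -/
theorem R4_QYBE (p Q : ℂ) (hp : p ≠ 0) (hQ : Q ≠ 0) :
    op12 (R4 p Q) * op23 (R4 p Q) * op12 (R4 p Q) =
      op23 (R4 p Q) * op12 (R4 p Q) * op23 (R4 p Q) := by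
  rw [R4_eq]; exact ybe _
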